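/- Let k be a field and X a type; let F := FreeLieAlgebra k (X ⊕ X) and let p : F → FreeLieAlgebra k X be the Lie algebra homomorphism determined by p(ι(Sum.inl x)) = ι(x) and p(ι(Sum.inr x)) = 0 for all x ∈ X. Then the Lie ideal of F generated by the dotted generators {ι(Sum.inr x) : x ∈ X} equals the kernel of p. -/

import Mathlib

/-- The Lie ideal of `FreeLieAlgebra k (X ⊕ X)` generated by the dotted
generators equals the kernel of the homomorphism `p` sending plain generators to generators and
dotted generators to `0`. -/
theorem dotted_ideal_eq_ker (k : Type*) [Field k] (X : Type*)
    (p : FreeLieAlgebra k (X ⊕ X) →ₗ⁅k⁆ FreeLieAlgebra k X)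
    (hpl : ∀ x : X, p (FreeLieAlgebra.of k (Sum.inl x)) = FreeLieAlgebra.of k x)
    (hpr : ∀ x : X, p (FreeLieAlgebra.of k (Sum.inr x)) = 0) :
    LieSubmodule.lieSpan k (FreeLieAlgebra k (X ⊕ X))
        (Set.range fun x : X => FreeLieAlgebra.of k (Sum.inr x)) =
      p.ker := by
  set F := FreeLieAlgebra k (X ⊕ X)
  set I : LieIdeal k F := LieSubmodule.lieSpan k F
      (Set.range fun x : X => FreeLieAlgebra.of k (Sum.inr x)) with hI
  -- quotient map as a Lie algebra hom
  let π : F →ₗ⁅k⁆ F ⧸ I :=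
    { toLinearMap := (I : Submodule k F).mkQ
      map_lie' := fun {x y} => rfl }
  have hπ : ∀ z : F, π z = 0 ↔ z ∈ I := fun z =>
    Submodule.Quotient.mk_eq_zero (I : Submodule k F)
  let ψ : FreeLieAlgebra k X →ₗ⁅k⁆ F ⧸ I :=
    FreeLieAlgebra.lift k fun x => π (FreeLieAlgebra.of k (Sum.inl x))
  have key : ψ.comp p = π := by
    apply FreeLieAlgebra.hom_ext
    rintro (x | x)
    · simp [ψ, hpl x, FreeLieAlgebra.lift_of_apply]
    · rw [LieHom.comp_apply, hpr x, map_zero ψ]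
      refine ((hπ _).2 ?_).symm
      exact LieSubmodule.subset_lieSpan ⟨x, rfl⟩
  apply le_antisymm
  · rw [hI, LieSubmodule.lieSpan_le]
    rintro z ⟨x, rfl⟩
    exact hpr x
  · intro z hz
    have hz0 : p z = 0 := hz
    have : π z = 0 := by
      rw [← LieHom.congr_fun key z, LieHom.comp_apply, hz0, map_zero ψ]
    exact (hπ z).1 this
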